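/- Let d ≥ 1 and let s = (s_1,…,s_d) be a sequence of positive integers with s_i ≤ s_{i+1} and s_{i+1} − s_i ≤ 1 for all 1 ≤ i ≤ d−1, and with s_d = d+1. Then the sequence e = (1, 2, …, d) is the unique s-inversion sequence all of whose d positions 0,1,…,d−1 are ascents; that is, it is the unique integer sequence with 0 ≤ e_i < s_i for all i such that (with e_0 = 0, s_0 = 1) e_i/s_i < e_{i+1}/s_{i+1} holds for every 0 ≤ i ≤ d−1. -/

import Mathlib

open Pointwise BigOperators

/-- The `s`-lecture hall polytope
`P_d^(s) = {x ∈ ℝ^d : 0 ≤ x_1/s_1 ≤ x_2/s_2 ≤ ⋯ ≤ x_d/s_d ≤ 1}`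
(indices shifted down by one: `x i` is the paper's `x_{i+1}`). -/
def lectureHall (d : ℕ) (s : Fin d → ℕ) : Set (Fin d → ℝ) :=
  {x | (∀ h : 0 < d, 0 ≤ x ⟨0, h⟩ / (s ⟨0, h⟩ : ℝ)) ∧
       (∀ i : Fin d, ∀ hi : (i : ℕ) + 1 < d,
          x i / (s i : ℝ) ≤ x ⟨(i : ℕ) + 1, hi⟩ / (s ⟨(i : ℕ) + 1, hi⟩ : ℝ)) ∧
       (∀ h : 0 < d,
          x ⟨d - 1, Nat.sub_lt h Nat.one_pos⟩ / (s ⟨d - 1, Nat.sub_lt h Nat.one_pos⟩ : ℝ) ≤ 1)}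

/-- The set of lattice points of `ℝ^d`. -/
def latticePoints (d : ℕ) : Set (Fin d → ℝ) := {x | ∀ i, ∃ n : ℤ, x i = (n : ℝ)}

/-- The dual polytope `Q^∨ = {y : ⟨x,y⟩ ≤ 1 for all x ∈ Q}`. -/
def dualPolytope {d : ℕ} (Q : Set (Fin d → ℝ)) : Set (Fin d → ℝ) :=
  {y | ∀ x ∈ Q, ∑ i, x i * y i ≤ 1}

/-- A full-dimensional lattice polytope is reflexive if it is Fano (the only
lattice point of its interior is the origin) and its dual polytope is a lattice
polytope. -/
def IsReflexive {d : ℕ} (Q : Set (Fin d → ℝ)) : Prop :=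
  interior Q ∩ latticePoints d = {0} ∧
  dualPolytope Q = convexHull ℝ (dualPolytope Q ∩ latticePoints d)

/-- Unimodular equivalence: `Q = f_U(P) + w` with `U` an integer matrix of
determinant `±1` and `w` an integer vector. -/
def UnimodularlyEquivalent {d : ℕ} (P Q : Set (Fin d → ℝ)) : Prop :=
  ∃ (U : Matrix (Fin d) (Fin d) ℤ) (w : Fin d → ℤ),
    (U.det = 1 ∨ U.det = -1) ∧
    Q = (fun x => Matrix.vecMul x (U.map (fun a : ℤ => (a : ℝ))) + fun i => (w i : ℝ)) '' P

/-- `P` is Gorenstein of index `c`: `c` is the smallest positive integer such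
that `cP` is unimodularly equivalent to a reflexive polytope. -/
def GorensteinOfIndex {d : ℕ} (P : Set (Fin d → ℝ)) (c : ℕ) : Prop :=
  0 < c ∧
  (∃ Q : Set (Fin d → ℝ), UnimodularlyEquivalent ((c : ℝ) • P) Q ∧ IsReflexive Q) ∧
  ∀ c' : ℕ, 0 < c' →
    (∃ Q : Set (Fin d → ℝ), UnimodularlyEquivalent ((c' : ℝ) • P) Q ∧ IsReflexive Q) →
    c ≤ c'

/-- `P` is translation equivalent to a reflexive polytope. -/
def TranslationReflexive {d : ℕ} (P : Set (Fin d → ℝ)) : Prop :=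
  ∃ w : Fin d → ℤ, IsReflexive ((fun x => x + fun i => (w i : ℝ)) '' P)

/-- With the conventions `e_0 = 0`, `s_0 = 1`, every position `0,…,d-1` of the
`s`-inversion sequence `e` is an ascent (`e i` is the paper's `e_{i+1}`). -/
def allAscents (d : ℕ) (s : Fin d → ℕ) (e : Fin d → ℤ) : Prop :=
  (∀ h : 0 < d, (0 : ℝ) / 1 < (e ⟨0, h⟩ : ℝ) / (s ⟨0, h⟩ : ℝ)) ∧
  ∀ i : Fin d, ∀ hi : (i : ℕ) + 1 < d,
    (e i : ℝ) / (s i : ℝ) < (e ⟨(i : ℕ) + 1, hi⟩ : ℝ) / (s ⟨(i : ℕ) + 1, hi⟩ : ℝ)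

/-- The integer decomposition property. -/
def HasIDP (d : ℕ) (P : Set (Fin d → ℝ)) : Prop :=
  ∀ k : ℕ, 0 < k → ∀ z : Fin d → ℤ,
    (fun i => (z i : ℝ)) ∈ (k : ℝ) • P →
    ∃ x : Fin k → Fin d → ℤ,
      (∀ j, (fun i => (x j i : ℝ)) ∈ P) ∧ ∀ i, (∑ j, x j i) = z i

/-- for weakly increasing `s` with steps at most 1 and
`s_d = d + 1`, the sequence `e = (1, 2, …, d)` is the unique `s`-inversion
sequence all of whose positions `0, …, d-1` are ascents. -/
theorem stmt_10 (d : ℕ) (hd : 0 < d) (s : Fin d → ℕ) (hpos : ∀ i, 0 < s i)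
    (hstep : ∀ i : Fin d, ∀ hi : (i : ℕ) + 1 < d,
      s i ≤ s ⟨(i : ℕ) + 1, hi⟩ ∧ s ⟨(i : ℕ) + 1, hi⟩ - s i ≤ 1)
    (hlast : s ⟨d - 1, Nat.sub_lt hd Nat.one_pos⟩ = d + 1) :
    ((∀ i : Fin d, 0 ≤ ((i : ℕ) : ℤ) + 1 ∧ ((i : ℕ) : ℤ) + 1 < (s i : ℤ)) ∧
      allAscents d s (fun i : Fin d => ((i : ℕ) : ℤ) + 1)) ∧
    ∀ e : Fin d → ℤ, (∀ i, 0 ≤ e i ∧ e i < (s i : ℤ)) → allAscents d s e →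
      e = fun i : Fin d => ((i : ℕ) : ℤ) + 1 := by
  -- step condition in convenient form
  have hstep' : ∀ i : Fin d, ∀ hi : (i : ℕ) + 1 < d,
      s i ≤ s ⟨(i : ℕ) + 1, hi⟩ ∧ s ⟨(i : ℕ) + 1, hi⟩ ≤ s i + 1 := by
    intro i hi
    obtain ⟨h1, h2⟩ := hstep i hi
    exact ⟨h1, by omega⟩
  -- lower bound on s by downward induction
  have slb : ∀ n : ℕ, ∀ i : Fin d, d - 1 - (i : ℕ) = n → d + 1 - n ≤ s i := by
    intro n
    induction n with
    | zero =>
      intro i h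
      have : (i : ℕ) = d - 1 := by have := i.2; omega
      have : i = ⟨d - 1, Nat.sub_lt hd Nat.one_pos⟩ := Fin.ext this
      rw [this, hlast]
      omega
    | succ n ih =>
      intro i h
      have hi : (i : ℕ) + 1 < d := by have := i.2; omega
      have h2 := (hstep' i hi).2
      have h3 := ih ⟨(i : ℕ) + 1, hi⟩ (by simp; omega)
      simp at h3
      omega
  have hs2 : ∀ i : Fin d, (i : ℕ) + 2 ≤ s i := by
    intro i
    have := slb (d - 1 - (i : ℕ)) i rfl
    have := i.2
    omega
  -- cross-multiplication helper
  have key : ∀ (a b : ℤ) (p q : ℕ), 0 < p → 0 < q →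
      ((a : ℝ) / p < (b : ℝ) / q ↔ a * q < b * p) := by
    intro a b p q hp hq
    rw [div_lt_div_iff₀ (by exact_mod_cast hp) (by exact_mod_cast hq)]
    exact_mod_cast Iff.rfl
  constructor
  · constructor
    · intro i
      have := hs2 i
      constructor <;> omega
    · constructor
      · intro h
        have h0 : (0 : ℝ) / 1 = 0 := by norm_num
        rw [h0]
        have hp := hpos ⟨0, h⟩
        have : (0 : ℝ) < ((0 : ℕ) : ℤ) + 1 := by norm_num
        apply div_pos (by push_cast; norm_num)
        exact_mod_cast hp
      · intro i hi
        rw [key]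
        · push_cast
          have h1 := (hstep' i hi).2
          have h2 := hs2 i
          have h1' : (s ⟨(i : ℕ) + 1, hi⟩ : ℤ) ≤ (s i : ℤ) + 1 := by exact_mod_cast h1
          have h2' : ((i : ℕ) : ℤ) + 2 ≤ (s i : ℤ) := by exact_mod_cast h2
          nlinarith [h1', h2']
        · exact hpos i
        · exact hpos _
  · intro e hbd hasc
    obtain ⟨hasc0, hascS⟩ := hasc
    -- lower bound: i + 1 ≤ e i, by induction on i
    have lb : ∀ n : ℕ, ∀ i : Fin d, (i : ℕ) = n → ((i : ℕ) : ℤ) + 1 ≤ e i := by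
      intro n
      induction n with
      | zero =>
        intro i h
        have hi0 : i = ⟨0, hd⟩ := Fin.ext (by simpa using h)
        have := hasc0 hd
        rw [show ((0 : ℝ) / 1) = 0 by norm_num] at this
        have hp : (0 : ℝ) < (s ⟨0, hd⟩ : ℝ) := by exact_mod_cast hpos ⟨0, hd⟩
        have : (0 : ℝ) < (e ⟨0, hd⟩ : ℝ) := by
          by_contra hc
          push_neg at hc
          have := div_nonpos_of_nonpos_of_nonneg hc hp.le
          linarith
        have : (0 : ℤ) < e ⟨0, hd⟩ := by exact_mod_cast this
        rw [hi0]; simpa using Int.add_one_le_of_lt this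
      | succ n ih =>
        intro i h
        have hn : n < d := by have := i.2; omega
        set j : Fin d := ⟨n, hn⟩ with hj
        have hji : (j : ℕ) + 1 < d := by simp [hj]; omega
        have hie : i = ⟨(j : ℕ) + 1, hji⟩ := Fin.ext (by simp [hj]; omega)
        have hlbj : ((j : ℕ) : ℤ) + 1 ≤ e j := ih j rfl
        have := hascS j hji
        rw [key _ _ _ _ (hpos j) (hpos _)] at this
        rw [← hie] at this
        -- e j * s i < e i * s j, with s j ≤ s i, e j ≥ n+1 > 0
        have hmono : s j ≤ s i := by rw [hie]; exact (hstep' j hji).1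
        have hmono' : (s j : ℤ) ≤ (s i : ℤ) := by exact_mod_cast hmono
        have hpj : (0 : ℤ) < (s j : ℤ) := by exact_mod_cast hpos j
        have hjn : ((j : ℕ) : ℤ) = (n : ℤ) := by simp [hj]
        rw [hjn] at hlbj
        have hej : (0 : ℤ) < e j := by omega
        have : e j * (s j : ℤ) < e i * (s j : ℤ) := by nlinarith
        have hlt : e j < e i := lt_of_mul_lt_mul_right this hpj.le
        have hin : ((i : ℕ) : ℤ) = (n : ℤ) + 1 := by rw [h]; push_cast; ring
        rw [hin]
        omega
    -- upper bound: e i ≤ i + 1, by downward induction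
    have ub : ∀ n : ℕ, ∀ i : Fin d, d - 1 - (i : ℕ) = n → e i ≤ ((i : ℕ) : ℤ) + 1 := by
      intro n
      induction n with
      | zero =>
        intro i h
        have hieq : (i : ℕ) = d - 1 := by have := i.2; omega
        have : i = ⟨d - 1, Nat.sub_lt hd Nat.one_pos⟩ := Fin.ext hieq
        have hb := (hbd i).2
        rw [this, hlast] at hb
        rw [← this] at hb
        rw [hieq]
        push_cast
        omega
      | succ n ih =>
        intro i h
        have hi : (i : ℕ) + 1 < d := by have := i.2; omega
        set j : Fin d := ⟨(i : ℕ) + 1, hi⟩ with hj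
        have hubj : e j ≤ ((j : ℕ) : ℤ) + 1 := ih j (by simp [hj]; omega)
        have := hascS i hi
        rw [key _ _ _ _ (hpos i) (hpos j)] at this
        -- e i * s j < e j * s i ≤ (i+2) * s i ≤ (i+2) * s j
        have hmono : s i ≤ s j := (hstep' i hi).1
        have hmono' : (s i : ℤ) ≤ (s j : ℤ) := by exact_mod_cast hmono
        have hpj : (0 : ℤ) < (s j : ℤ) := by exact_mod_cast hpos j
        have hpi : (0 : ℤ) < (s i : ℤ) := by exact_mod_cast hpos i
        have hjv : ((j : ℕ) : ℤ) = ((i : ℕ) : ℤ) + 1 := by simp [hj]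
        rw [hjv] at hubj
        have h1 : e i * (s j : ℤ) < (((i : ℕ) : ℤ) + 2) * (s j : ℤ) := by nlinarith
        have : e i < ((i : ℕ) : ℤ) + 2 := lt_of_mul_lt_mul_right h1 hpj.le
        omega
    funext i
    have h1 := lb (i : ℕ) i rfl
    have h2 := ub (d - 1 - (i : ℕ)) i rfl
    show e i = ((i : ℕ) : ℤ) + 1
    omega
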